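/- Let (F, ι, μ) be a Set-monad (associativity of μ not required, only the two unit laws). If F(1) ≅ 1, then for all sets A₁, A₂ the canonical map δ = (Fπ₁, Fπ₂) : F(A₁ × A₂) → F(A₁) × F(A₂) is surjective. -/

import Mathlib

open CategoryTheory

universe u

theorem connected_monad_delta_surjective
    (F : Type u ⥤ Type u) (ι : 𝟭 (Type u) ⟶ F) (μ : F ⋙ F ⟶ F)
    (unit1 : ∀ X : Type u, μ.app X ∘ ι.app (F.obj X) = id)
    (unit2 : ∀ X : Type u, μ.app X ∘ F.map (ι.app X) = id)
    (hconn : Nonempty (F.obj (PUnit : Type u) ≃ PUnit))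
    (A₁ A₂ : Type u) :
    Function.Surjective (fun u : F.obj (A₁ × A₂) =>
      (F.map (TypeCat.ofHom (Prod.fst : A₁ × A₂ → A₁)) u, F.map (TypeCat.ofHom (Prod.snd : A₁ × A₂ → A₂)) u)) := by
  obtain ⟨e⟩ := hconn
  have hsub : ∀ x y : F.obj (PUnit : Type u), x = y := fun x y =>
    e.injective (Subsingleton.elim _ _)
  -- constant maps factor through ι
  have hconst : ∀ {X Y : Type u} (c : Y) (x : F.obj X),
      F.map (TypeCat.ofHom (fun _ => c)) x = ι.app Y c := by
    intro X Y c x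
    have h2 : F.map (TypeCat.ofHom (fun _ : X => c)) x
        = F.map (TypeCat.ofHom (fun _ : PUnit => c)) (F.map (TypeCat.ofHom (fun _ : X => PUnit.unit)) x) :=
      FunctorToTypes.map_comp_apply F
        (TypeCat.ofHom (fun _ : X => PUnit.unit)) (TypeCat.ofHom (fun _ : PUnit => c)) x
    have h3 : F.map (TypeCat.ofHom (fun _ : X => PUnit.unit)) x = ι.app PUnit PUnit.unit :=
      hsub _ _
    have h4 := types_congr_hom (ι.naturality (TypeCat.ofHom (fun _ : PUnit => c))) PUnit.unit
    simp only [Functor.id_map, types_comp_apply, Functor.id_obj] at h4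
    rw [h2, h3]
    exact h4.symm
  rintro ⟨a, b⟩
  set f : A₁ → F.obj (A₁ × A₂) := fun a₁ => F.map (TypeCat.ofHom (fun a₂ => (a₁, a₂))) b with hf
  refine ⟨μ.app (A₁ × A₂) (F.map (TypeCat.ofHom f) a), ?_⟩
  have hnat : ∀ {X Y : Type u} (g : X → Y) (t : F.obj (F.obj X)),
      F.map (TypeCat.ofHom g) (μ.app X t) = μ.app Y (F.map (F.map (TypeCat.ofHom g)) t) := by
    intro X Y g t
    exact (types_congr_hom (μ.naturality (TypeCat.ofHom g)) t).symm
  simp only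
  refine Prod.ext ?_ ?_
  · show F.map (TypeCat.ofHom Prod.fst) (μ.app (A₁ × A₂) (F.map (TypeCat.ofHom f) a)) = a
    rw [hnat]
    have key : F.map (F.map (TypeCat.ofHom (Prod.fst : A₁ × A₂ → A₁))) (F.map (TypeCat.ofHom f) a)
        = F.map (ι.app A₁) a := by
      rw [← FunctorToTypes.map_comp_apply]
      have : (TypeCat.ofHom f ≫ F.map (TypeCat.ofHom (Prod.fst : A₁ × A₂ → A₁))) = ι.app A₁ := by
        ext a₁
        show F.map (TypeCat.ofHom Prod.fst) (F.map (TypeCat.ofHom (fun a₂ => (a₁, a₂))) b) = ι.app A₁ a₁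
        rw [← FunctorToTypes.map_comp_apply]
        exact hconst a₁ b
      rw [this]
    rw [key]
    exact congrFun (unit2 A₁) a
  · show F.map (TypeCat.ofHom Prod.snd) (μ.app (A₁ × A₂) (F.map (TypeCat.ofHom f) a)) = b
    rw [hnat]
    have key : F.map (F.map (TypeCat.ofHom (Prod.snd : A₁ × A₂ → A₂))) (F.map (TypeCat.ofHom f) a)
        = ι.app (F.obj A₂) b := by
      rw [← FunctorToTypes.map_comp_apply]
      have hc : (TypeCat.ofHom f ≫ F.map (TypeCat.ofHom (Prod.snd : A₁ × A₂ → A₂))) = TypeCat.ofHom (fun _ : A₁ => b) := by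
        ext a₁
        show F.map (TypeCat.ofHom Prod.snd) (F.map (TypeCat.ofHom (fun a₂ => (a₁, a₂))) b) = b
        rw [← FunctorToTypes.map_comp_apply]
        have hid : (TypeCat.ofHom (fun a₂ => (a₁, a₂)) ≫ TypeCat.ofHom (Prod.snd : A₁ × A₂ → A₂))
            = 𝟙 A₂ := rfl
        rw [hid, F.map_id]
        rfl
      rw [hc]
      exact hconst b a
    rw [key]
    exact congrFun (unit1 A₂) b
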